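/- With φ_n as defined (φ_n(ξ) = |ξ|^p for |ξ| ≤ n, quadratic extension for |ξ| > n, p ≥ 2), the inequality |ξ · φ_n'(ξ)| ≤ p · φ_n(ξ) holds for all ξ ∈ ℝ. -/

import Mathlib

open Real

noncomputable def phiN (p : ℝ) (n : ℕ) (ξ : ℝ) : ℝ :=
  if |ξ| ≤ (n : ℝ) then |ξ| ^ p
  else (n : ℝ) ^ (p - 2) *
    (p * (p - 1) / 2 * ξ ^ 2 - p * (p - 2) * n * |ξ| + (p - 1) * (p - 2) / 2 * n ^ 2)

noncomputable def phiN' (p : ℝ) (n : ℕ) (ξ : ℝ) : ℝ :=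
  if |ξ| ≤ (n : ℝ) then p * (p - 1) * |ξ| ^ (p - 2)
  else (n : ℝ) ^ (p - 2) * p * (p - 1)

lemma phiN_even (p : ℝ) (n : ℕ) (ξ : ℝ) : phiN p n (-ξ) = phiN p n ξ := by
  simp [phiN, abs_neg, neg_sq]

lemma phiN_boundary (p : ℝ) (n : ℕ) (hn : 0 < n) :
    (n : ℝ) ^ (p - 2) * ((n : ℝ) ^ 2) = (n : ℝ) ^ p := by
  have hN : (0 : ℝ) < n := by exact_mod_cast hn
  rw [← Real.rpow_two, ← Real.rpow_add hN]
  norm_num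

/-- derivative of the quadratic piece -/
lemma hasDerivAt_quad (p : ℝ) (n : ℕ) (x : ℝ) :
    HasDerivAt (fun y : ℝ => (n : ℝ) ^ (p - 2) *
      (p * (p - 1) / 2 * y ^ 2 - p * (p - 2) * n * y + (p - 1) * (p - 2) / 2 * n ^ 2))
      ((n : ℝ) ^ (p - 2) * (p * (p - 1) * x - p * (p - 2) * n)) x := by
  have h1 : HasDerivAt (fun y : ℝ => p * (p - 1) / 2 * y ^ 2 - p * (p - 2) * n * y
      + (p - 1) * (p - 2) / 2 * n ^ 2)
      (p * (p - 1) * x - p * (p - 2) * n) x := by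
    have h2 := ((hasDerivAt_pow 2 x).const_mul (p * (p - 1) / 2)).sub
      ((hasDerivAt_id x).const_mul (p * (p - 2) * n))
    have h3 := h2.add_const ((p - 1) * (p - 2) / 2 * (n : ℝ) ^ 2)
    refine h3.congr_deriv ?_
    norm_num
    ring
  simpa using h1.const_mul ((n : ℝ) ^ (p - 2))

lemma main_nonneg (p : ℝ) (hp : 2 ≤ p) (n : ℕ) (hn : 0 < n) (ξ : ℝ) (hξ : 0 ≤ ξ) :
    |ξ * deriv (phiN p n) ξ| ≤ p * phiN p n ξ := by
  have hN : (0 : ℝ) < n := by exact_mod_cast hn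
  have hp0 : (0 : ℝ) < p := by linarith
  have hpow : (n : ℝ) ^ (p - 2) * (n : ℝ) = (n : ℝ) ^ (p - 1) := by
    rw [← Real.rpow_add_one hN.ne' (p - 2)]
    congr 1
    ring
  rcases eq_or_lt_of_le hξ with h0 | h0
  · -- ξ = 0
    rw [← h0]
    simp [phiN, abs_of_nonneg hN.le, hN.le, Real.zero_rpow (ne_of_gt hp0)]
  rcases lt_trichotomy ξ (n : ℝ) with hlt | heq | hgt
  · -- 0 < ξ < n : phiN = x^p near ξ
    have hev : phiN p n =ᶠ[nhds ξ] fun x => x ^ p := by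
      filter_upwards [Ioo_mem_nhds h0 hlt] with x hx
      simp [phiN, abs_of_pos hx.1, hx.2.le]
    have hd : HasDerivAt (phiN p n) (p * ξ ^ (p - 1)) ξ :=
      (Real.hasDerivAt_rpow_const (Or.inl h0.ne')).congr_of_eventuallyEq hev
    rw [hd.deriv]
    have hval : phiN p n ξ = ξ ^ p := by simp [phiN, abs_of_pos h0, hlt.le]
    have hmul : ξ * ξ ^ (p - 1) = ξ ^ p := by
      rw [mul_comm, ← Real.rpow_add_one h0.ne' (p - 1), sub_add_cancel]
    rw [hval, abs_of_nonneg (by positivity),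
      show ξ * (p * ξ ^ (p - 1)) = p * (ξ * ξ ^ (p - 1)) from by ring, hmul]
  · -- ξ = n
    rw [heq]
    have hval : phiN p n (n : ℝ) = (n : ℝ) ^ p := by simp [phiN]
    have hd : HasDerivAt (phiN p n) (p * (n : ℝ) ^ (p - 1)) (n : ℝ) := by
      have hleft : HasDerivWithinAt (phiN p n) (p * (n : ℝ) ^ (p - 1))
          (Set.Iic (n : ℝ)) (n : ℝ) := by
        have h1 : HasDerivAt (fun x : ℝ => x ^ p) (p * (n : ℝ) ^ (p - 1)) (n : ℝ) :=
          Real.hasDerivAt_rpow_const (Or.inl hN.ne')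
        refine (h1.hasDerivWithinAt).congr_of_eventuallyEq ?_ (by simp [phiN])
        have hpos : ∀ᶠ x in nhdsWithin (n : ℝ) (Set.Iic (n : ℝ)), 0 < x :=
          eventually_nhdsWithin_of_eventually_nhds (eventually_gt_nhds hN)
        filter_upwards [self_mem_nhdsWithin, hpos] with x hx hxp
        have hx' : |x| ≤ (n : ℝ) := by rw [abs_of_pos hxp]; exact hx
        simp only [phiN, hx', if_pos, abs_of_pos hxp]
        rw [if_pos (show x ≤ (n : ℝ) from hx)]
      have hright : HasDerivWithinAt (phiN p n) (p * (n : ℝ) ^ (p - 1))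
          (Set.Ici (n : ℝ)) (n : ℝ) := by
        have h1 := hasDerivAt_quad p n (n : ℝ)
        have heqd : (n : ℝ) ^ (p - 2) * (p * (p - 1) * (n : ℝ) - p * (p - 2) * n)
            = p * (n : ℝ) ^ (p - 1) := by
          calc (n : ℝ) ^ (p - 2) * (p * (p - 1) * (n : ℝ) - p * (p - 2) * n)
              = p * ((n : ℝ) ^ (p - 2) * (n : ℝ)) := by ring
          _ = p * (n : ℝ) ^ (p - 1) := by rw [hpow]
        rw [heqd] at h1
        refine (h1.hasDerivWithinAt).congr ?_ ?_
        · intro x hx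
          simp only [Set.mem_Ici] at hx
          rcases eq_or_lt_of_le hx with rfl | hx'
          · rw [hval]
            have hb := phiN_boundary p n hn
            nlinarith [hb]
          · have hxpos : 0 < x := lt_trans hN hx'
            simp [phiN, abs_of_pos hxpos, not_le.mpr hx']
        · rw [hval]
          have hb := phiN_boundary p n hn
          nlinarith [hb]
      have := hleft.union hright
      rwa [Set.Iic_union_Ici, hasDerivWithinAt_univ] at this
    rw [hd.deriv, hval, abs_of_nonneg (by positivity)]
    have hmul : (n : ℝ) * (n : ℝ) ^ (p - 1) = (n : ℝ) ^ p := by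
      rw [mul_comm, ← Real.rpow_add_one hN.ne' (p - 1), sub_add_cancel]
    rw [show (n : ℝ) * (p * (n : ℝ) ^ (p - 1)) = p * ((n : ℝ) * (n : ℝ) ^ (p - 1)) from by ring,
      hmul]
  · -- ξ > n
    have hev : phiN p n =ᶠ[nhds ξ] fun x => (n : ℝ) ^ (p - 2) *
        (p * (p - 1) / 2 * x ^ 2 - p * (p - 2) * n * x + (p - 1) * (p - 2) / 2 * n ^ 2) := by
      filter_upwards [Ioi_mem_nhds hgt] with x hx
      have hx' : (n : ℝ) < x := hx
      have hxpos : 0 < x := lt_trans hN hx'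
      simp [phiN, abs_of_pos hxpos, not_le.mpr hx']
    have hd : HasDerivAt (phiN p n)
        ((n : ℝ) ^ (p - 2) * (p * (p - 1) * ξ - p * (p - 2) * n)) ξ :=
      (hasDerivAt_quad p n ξ).congr_of_eventuallyEq hev
    rw [hd.deriv]
    have hval : phiN p n ξ = (n : ℝ) ^ (p - 2) *
        (p * (p - 1) / 2 * ξ ^ 2 - p * (p - 2) * n * ξ + (p - 1) * (p - 2) / 2 * n ^ 2) := by
      simp [phiN, abs_of_pos h0, not_le.mpr hgt]
    rw [hval]
    have hM : (0 : ℝ) < (n : ℝ) ^ (p - 2) := Real.rpow_pos_of_pos hN _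
    have hp1 : (0 : ℝ) ≤ p - 1 := by linarith
    have hp2 : (0 : ℝ) ≤ p - 2 := by linarith
    have hinner : 0 ≤ p * (p - 1) * ξ - p * (p - 2) * n := by
      nlinarith [mul_pos hp0 hN,
        mul_nonneg (mul_nonneg hp0.le hp1) (by linarith : (0:ℝ) ≤ ξ - n)]
    rw [abs_of_nonneg (by positivity)]
    have key : ξ * (p * (p - 1) * ξ - p * (p - 2) * n) ≤
        p * (p * (p - 1) / 2 * ξ ^ 2 - p * (p - 2) * n * ξ + (p - 1) * (p - 2) / 2 * n ^ 2) := by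
      nlinarith [mul_nonneg (mul_nonneg (mul_nonneg hp0.le hp1) hp2) (sq_nonneg (ξ - (n : ℝ)))]
    calc ξ * ((n : ℝ) ^ (p - 2) * (p * (p - 1) * ξ - p * (p - 2) * n))
        = (n : ℝ) ^ (p - 2) * (ξ * (p * (p - 1) * ξ - p * (p - 2) * n)) := by ring
    _ ≤ (n : ℝ) ^ (p - 2) * (p * (p * (p - 1) / 2 * ξ ^ 2 - p * (p - 2) * n * ξ
          + (p - 1) * (p - 2) / 2 * n ^ 2)) := mul_le_mul_of_nonneg_left key hM.le
    _ = p * ((n : ℝ) ^ (p - 2) * (p * (p - 1) / 2 * ξ ^ 2 - p * (p - 2) * n * ξ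
          + (p - 1) * (p - 2) / 2 * n ^ 2)) := by ring

theorem abs_mul_deriv_phiN_le (p : ℝ) (hp : 2 ≤ p) (n : ℕ) (hn : 0 < n) (ξ : ℝ) :
    |ξ * deriv (phiN p n) ξ| ≤ p * phiN p n ξ := by
  rcases le_or_gt 0 ξ with hξ | hξ
  · exact main_nonneg p hp n hn ξ hξ
  · have hfun : (fun x => phiN p n (-x)) = phiN p n := funext fun x => phiN_even p n x
    have hder : deriv (phiN p n) ξ = - deriv (phiN p n) (-ξ) := by
      conv_lhs => rw [← hfun]
      exact deriv_comp_neg (f := phiN p n) ξ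
    have h1 := main_nonneg p hp n hn (-ξ) (by linarith)
    calc |ξ * deriv (phiN p n) ξ| = |(-ξ) * deriv (phiN p n) (-ξ)| := by
          rw [hder, abs_mul, abs_mul, abs_neg, abs_neg]
    _ ≤ p * phiN p n (-ξ) := h1
    _ = p * phiN p n ξ := by rw [phiN_even]
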